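/- If w and t are two vertices each joined to the same edge uv by an elementary cycle (through uv), then there is a simple path from w to t passing through the edge uv whose cost is at most the sum of the costs of the two cycles. -/

import Mathlib

/-- The cost of a walk: sum of the weights of its edges. -/
def wcost {V : Type*} {G : SimpleGraph V} {x y : V} (ω : Sym2 V → ℝ) (p : G.Walk x y) : ℝ :=
  (p.edges.map ω).sum

section Helpers

open SimpleGraph Walk

variable {V : Type*} {G : SimpleGraph V}

lemma wcost_append {x y z : V} (ω : Sym2 V → ℝ) (p : G.Walk x y) (q : G.Walk y z) :
    wcost ω (p.append q) = wcost ω p + wcost ω q := by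
  simp [wcost, Walk.edges_append]

lemma wcost_cons {x y z : V} (ω : Sym2 V → ℝ) (h : G.Adj x y) (p : G.Walk y z) :
    wcost ω (Walk.cons h p) = ω s(x, y) + wcost ω p := by
  simp [wcost]

lemma wcost_reverse {x y : V} (ω : Sym2 V → ℝ) (p : G.Walk x y) :
    wcost ω p.reverse = wcost ω p := by
  simp [wcost, Walk.edges_reverse, List.sum_reverse]

lemma wcost_nonneg {x y : V} {ω : Sym2 V → ℝ} (hω : ∀ e ∈ G.edgeSet, 0 ≤ ω e)
    (p : G.Walk x y) : 0 ≤ wcost ω p := by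
  apply List.sum_nonneg
  intro a ha
  obtain ⟨e, he, rfl⟩ := List.mem_map.mp ha
  exact hω e (p.edges_subset_edgeSet he)

lemma wcost_takeUntil_add [DecidableEq V] {x y z : V} (ω : Sym2 V → ℝ) (p : G.Walk x y)
    (h : z ∈ p.support) :
    wcost ω (p.takeUntil z h) + wcost ω (p.dropUntil z h) = wcost ω p := by
  rw [← wcost_append, Walk.take_spec]

lemma support_takeUntil_start [DecidableEq V] {a b : V} (p : G.Walk a b) (h : a ∈ p.support) :
    (p.takeUntil a h).support = [a] := by
  have hc := p.count_support_takeUntil_eq_one h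
  cases hp : p.takeUntil a h with
  | nil => simp
  | cons h' q =>
    exfalso
    rw [hp] at hc
    rw [Walk.support_cons, List.count_cons_self] at hc
    have : a ∈ q.support := q.end_mem_support
    have h4 : q.support.count a ≠ 0 := fun h0 => (List.count_eq_zero.mp h0) this
    omega

lemma firstHit [DecidableEq V] {a b : V} (P : G.Walk a b) (S : V → Prop) (hb : S b) :
    ∃ (z : V) (hz : z ∈ P.support), S z ∧
      ∀ x ∈ (P.takeUntil z hz).support, S x → x = z := by
  induction P with
  | nil =>
    refine ⟨_, Walk.start_mem_support _, hb, ?_⟩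
    intro x hx _
    have := Walk.support_takeUntil_subset _ _ hx
    simpa using this
  | @cons a c b h P ih =>
    by_cases ha : S a
    · refine ⟨a, Walk.start_mem_support _, ha, ?_⟩
      intro x hx _
      rw [support_takeUntil_start] at hx
      simpa using hx
    · obtain ⟨z, hz, hSz, hpre⟩ := ih hb
      have hza : a ≠ z := fun hh => ha (hh ▸ hSz)
      have hmem : z ∈ (Walk.cons h P).support := by
        rw [Walk.support_cons]; exact List.mem_cons_of_mem _ hz
      refine ⟨z, hmem, hSz, ?_⟩
      have heq : (Walk.cons h P).takeUntil z hmem = Walk.cons h (P.takeUntil z hz) := by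
        simp only [Walk.takeUntil]
        rw [dif_neg hza]
      intro x hx hSx
      rw [heq, Walk.support_cons, List.mem_cons] at hx
      rcases hx with rfl | hx
      · exact absurd hSx ha
      · exact hpre x hx hSx

lemma splice_isPath {w z a b t : V} (hab : G.Adj a b)
    (α : G.Walk w z) (B : G.Walk z a) (M : G.Walk b t)
    (hα : α.IsPath) (hB : B.IsPath) (hM : M.IsPath)
    (hint : ∀ x ∈ α.support, (x ∈ B.support ∨ x ∈ M.support) → x = z)
    (hBM : ∀ x ∈ B.support, x ∉ M.support) :
    (α.append (B.append (Walk.cons hab M))).IsPath := by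
  have hBsup : (B.append (Walk.cons hab M)).support = B.support ++ M.support := by
    rw [Walk.support_append, Walk.support_cons, List.tail_cons]
  rw [Walk.isPath_def, Walk.support_append, hBsup]
  have hBcons : B.support = z :: B.support.tail := B.support_eq_cons
  rw [hBcons, List.cons_append, List.tail_cons]
  rw [List.nodup_append]
  have hαn : α.support.Nodup := hα.support_nodup
  have hBn : B.support.Nodup := hB.support_nodup
  have hzB : z ∉ B.support.tail := by
    rw [hBcons] at hBn; exact (List.nodup_cons.mp hBn).1
  have hBtn : B.support.tail.Nodup := by
    rw [hBcons] at hBn; exact (List.nodup_cons.mp hBn).2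
  refine ⟨hαn, ?_, ?_⟩
  · rw [List.nodup_append]
    refine ⟨hBtn, hM.support_nodup, ?_⟩
    intro x hx y hx' hxy
    subst hxy
    exact hBM x (List.mem_of_mem_tail hx) hx'
  · intro x hxα y hxr hxy
    subst hxy
    rw [List.mem_append] at hxr
    rcases hxr with hx | hx
    · have hxz := hint x hxα (Or.inl (List.mem_of_mem_tail hx))
      exact hzB (hxz ▸ hx)
    · have hxz := hint x hxα (Or.inr hx)
      exact hBM _ B.start_mem_support (hxz ▸ hx)

lemma exists_cons_of_edge {a b c : V} {p : G.Walk a c} (hp : p.IsPath)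
    (he : s(a, b) ∈ p.edges) :
    ∃ (h : G.Adj a b) (q : G.Walk b c), p = Walk.cons h q := by
  cases p with
  | nil => simp at he
  | @cons _ x _ h q =>
    rw [Walk.edges_cons, List.mem_cons] at he
    rcases he with he | he
    · obtain rfl : b = x := Sym2.congr_right.mp he
      exact ⟨h, q, rfl⟩
    · have h1 : a ∈ q.support := q.fst_mem_support_of_mem_edges he
      have h2 : a ∉ q.support := (Walk.cons_isPath_iff h q).mp hp |>.2
      exact absurd h1 h2

lemma cycle_split [DecidableEq V] {u v w : V} {c : G.Walk w w} (hc : c.IsCycle)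
    (he : s(u, v) ∈ c.edges) :
    ∃ p : G.Walk v u, p.IsPath ∧ w ∈ p.support ∧ c.edges.Perm (s(u, v) :: p.edges) := by
  have hu : u ∈ c.support := c.fst_mem_support_of_mem_edges he
  have hc' : (c.rotate u hu).IsCycle := hc.rotate hu
  have hrot : (c.rotate u hu).edges.Perm c.edges := (c.rotate_edges u hu).perm
  have he' : s(u, v) ∈ (c.rotate u hu).edges := hrot.mem_iff.mpr he
  have hw : w ∈ (c.rotate u hu).support := by
    have h1 : w ∈ c.support.tail := by
      cases c with
      | nil => exact absurd rfl hc.ne_nil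
      | cons h q => simp
    have h2 : w ∈ (c.rotate u hu).support.tail := ((c.support_rotate u hu).perm).mem_iff.mpr h1
    exact List.mem_of_mem_tail h2
  obtain ⟨x, hx, r, hr⟩ := Walk.not_nil_iff.mp hc'.not_nil
  rw [hr] at hc' he' hrot hw
  rw [Walk.cons_isCycle_iff] at hc'
  obtain ⟨hrpath, _⟩ := hc'
  rw [Walk.edges_cons, List.mem_cons] at he'
  rcases he' with he1 | he2
  · obtain rfl : v = x := Sym2.congr_right.mp he1
    refine ⟨r, hrpath, ?_, ?_⟩
    · rw [Walk.support_cons, List.mem_cons] at hw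
      rcases hw with rfl | hw
      · exact r.end_mem_support
      · exact hw
    · rw [Walk.edges_cons] at hrot
      exact hrot.symm
  · have hrev : r.reverse.IsPath := hrpath.reverse
    have herev : s(u, v) ∈ r.reverse.edges := by
      rw [Walk.edges_reverse, List.mem_reverse]; exact he2
    obtain ⟨h2, q, hq⟩ := exists_cons_of_edge hrev herev
    have hr2 : r = (Walk.cons h2 q).reverse := by rw [← hq, Walk.reverse_reverse]
    have hqpath : q.IsPath ∧ u ∉ q.support := (Walk.cons_isPath_iff h2 q).mp (hq ▸ hrev)
    refine ⟨(Walk.cons hx q.reverse).reverse, ?_, ?_, ?_⟩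
    · apply Walk.IsPath.reverse
      rw [Walk.cons_isPath_iff]
      refine ⟨hqpath.1.reverse, ?_⟩
      rw [Walk.support_reverse, List.mem_reverse]
      exact hqpath.2
    · rw [Walk.support_cons, List.mem_cons] at hw
      rw [Walk.support_reverse, List.mem_reverse, Walk.support_cons, List.mem_cons]
      rcases hw with rfl | hw
      · exact Or.inl rfl
      · rw [hr2, Walk.support_reverse, List.mem_reverse, Walk.support_cons, List.mem_cons] at hw
        rcases hw with rfl | hw
        · exact Or.inl rfl
        · exact Or.inr (by rw [Walk.support_reverse, List.mem_reverse]; exact hw)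
    · -- c.edges ~ s(u,v) :: ((cons hx q.reverse).reverse).edges
      have e1 : r.edges = q.edges.reverse ++ [s(u, v)] := by
        rw [hr2, Walk.edges_reverse, Walk.edges_cons]
        simp [Sym2.eq_swap]
      have e2 : ((Walk.cons hx q.reverse).reverse).edges = q.edges ++ [s(u, x)] := by
        rw [Walk.edges_reverse, Walk.edges_cons, Walk.edges_reverse]
        simp
      refine (hrot.symm.trans ?_)
      rw [Walk.edges_cons, e1, e2]
      refine (List.Perm.cons _ (List.perm_append_singleton _ _)).trans ?_
      refine (List.Perm.cons _ (List.Perm.cons _ q.edges.reverse_perm)).trans ?_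
      refine (List.Perm.swap _ _ _).trans ?_
      exact List.Perm.cons _ (List.perm_append_singleton _ _).symm


lemma assemble {V : Type*} [DecidableEq V] {G : SimpleGraph V} {u v w t : V} (ω : Sym2 V → ℝ)
    (hω' : ∀ e ∈ G.edgeSet, 0 ≤ ω e) (huv : G.Adj u v) (hwt : w ≠ t)
    (p : G.Walk v u) (hp : p.IsPath) (hwmem : w ∈ p.support)
    (q : G.Walk v u) (hq : q.IsPath) (htmem : t ∈ q.support) :
    ∃ P : G.Walk w t, P.IsPath ∧ s(u, v) ∈ P.edges ∧
      wcost ω P ≤ wcost ω p + wcost ω q + ω s(u, v) := by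
  have hApath : (p.takeUntil w hwmem).IsPath := hp.takeUntil hwmem
  have hP1path : (p.dropUntil w hwmem).IsPath := hp.dropUntil hwmem
  have hMpath : (q.takeUntil t htmem).IsPath := hq.takeUntil htmem
  have hNpath : (q.dropUntil t htmem).IsPath := hq.dropUntil htmem
  have hqsup : (q.takeUntil t htmem).support ++ (q.dropUntil t htmem).support.tail
      = q.support := by
    rw [← Walk.support_append, Walk.take_spec]
  have hqdisj : (q.takeUntil t htmem).support.Disjoint (q.dropUntil t htmem).support.tail := by
    have hnd := hq.support_nodup
    rw [← hqsup, List.nodup_append] at hnd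
    exact fun a ha hb => hnd.2.2 a ha a hb rfl
  have NMt : ∀ x, x ∈ (q.dropUntil t htmem).support → x ∈ (q.takeUntil t htmem).support →
      x = t := by
    intro x hxN hxM
    rw [(q.dropUntil t htmem).support_eq_cons, List.mem_cons] at hxN
    rcases hxN with rfl | hxN
    · rfl
    · exact absurd hxN (hqdisj hxM)
  have hpsup : (p.takeUntil w hwmem).support ++ (p.dropUntil w hwmem).support.tail
      = p.support := by
    rw [← Walk.support_append, Walk.take_spec]
  have hpdisj : (p.takeUntil w hwmem).support.Disjoint (p.dropUntil w hwmem).support.tail := by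
    have hnd := hp.support_nodup
    rw [← hpsup, List.nodup_append] at hnd
    exact fun a ha hb => hnd.2.2 a ha a hb rfl
  have P12w : ∀ x, x ∈ (p.dropUntil w hwmem).support → x ∈ (p.takeUntil w hwmem).support →
      x = w := by
    intro x hxP hxA
    rw [(p.dropUntil w hwmem).support_eq_cons, List.mem_cons] at hxP
    rcases hxP with rfl | hxP
    · rfl
    · exact absurd hxP (hpdisj hxA)
  obtain ⟨z1, hz1, hSz1, hpre1⟩ := firstHit (p.dropUntil w hwmem)
    (fun x => x ∈ (q.dropUntil t htmem).support ∨ x ∈ (q.takeUntil t htmem).support)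
    (Or.inl (q.dropUntil t htmem).end_mem_support)
  obtain ⟨z2, hz2, hSz2, hpre2⟩ := firstHit (p.takeUntil w hwmem).reverse
    (fun x => x ∈ (q.dropUntil t htmem).support ∨ x ∈ (q.takeUntil t htmem).support)
    (Or.inr (q.takeUntil t htmem).start_mem_support)
  have key : ∃ (z : V) (α : G.Walk w z), α.IsPath ∧ wcost ω α ≤ wcost ω p ∧ z ≠ t ∧
      (z ∈ (q.dropUntil t htmem).support ∨ z ∈ (q.takeUntil t htmem).support) ∧
      ∀ x ∈ α.support,
        (x ∈ (q.dropUntil t htmem).support ∨ x ∈ (q.takeUntil t htmem).support) → x = z := by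
    by_cases hz1t : z1 = t
    · have hz2t : z2 ≠ t := by
        intro h
        have hA' : t ∈ (p.takeUntil w hwmem).support := by
          have := hz2
          rw [Walk.support_reverse, List.mem_reverse] at this
          exact h ▸ this
        exact hwt (P12w t (hz1t ▸ hz1) hA').symm
      refine ⟨z2, (p.takeUntil w hwmem).reverse.takeUntil z2 hz2,
        hApath.reverse.takeUntil hz2, ?_, hz2t, hSz2, hpre2⟩
      have h1 := wcost_takeUntil_add ω (p.takeUntil w hwmem).reverse hz2
      have h2 := wcost_reverse ω (p.takeUntil w hwmem)
      have h3 := wcost_takeUntil_add ω p hwmem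
      have n1 := wcost_nonneg hω' ((p.takeUntil w hwmem).reverse.dropUntil z2 hz2)
      have n2 := wcost_nonneg hω' (p.dropUntil w hwmem)
      linarith
    · refine ⟨z1, (p.dropUntil w hwmem).takeUntil z1 hz1,
        hP1path.takeUntil hz1, ?_, hz1t, hSz1, hpre1⟩
      have h1 := wcost_takeUntil_add ω (p.dropUntil w hwmem) hz1
      have h3 := wcost_takeUntil_add ω p hwmem
      have n1 := wcost_nonneg hω' ((p.dropUntil w hwmem).dropUntil z1 hz1)
      have n2 := wcost_nonneg hω' (p.takeUntil w hwmem)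
      linarith
  obtain ⟨z, α, hαpath, hαcost, hzt, hSz, hpre⟩ := key
  rcases hSz with hzN | hzM
  · -- z lies on N = q.dropUntil t : the path from t to u
    have hNsplit : ((q.dropUntil t htmem).takeUntil z hzN).support ++
        ((q.dropUntil t htmem).dropUntil z hzN).support.tail = (q.dropUntil t htmem).support := by
      rw [← Walk.support_append, Walk.take_spec]
    have hNnd := hNpath.support_nodup
    rw [← hNsplit, List.nodup_append] at hNnd
    have htB : t ∉ ((q.dropUntil t htmem).dropUntil z hzN).support := by
      intro htB
      rw [((q.dropUntil t htmem).dropUntil z hzN).support_eq_cons, List.mem_cons] at htB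
      rcases htB with h | htB
      · exact hzt h.symm
      · exact hNnd.2.2 _ ((q.dropUntil t htmem).takeUntil z hzN).start_mem_support _ htB rfl
    have hBM : ∀ x ∈ ((q.dropUntil t htmem).dropUntil z hzN).support,
        x ∉ (q.takeUntil t htmem).support := by
      intro x hxB hxM
      have hxt : x = t := NMt x (Walk.support_dropUntil_subset _ hzN hxB) hxM
      exact htB (hxt ▸ hxB)
    have hint : ∀ x ∈ α.support,
        (x ∈ ((q.dropUntil t htmem).dropUntil z hzN).support ∨
          x ∈ (q.takeUntil t htmem).support) → x = z := by
      intro x hxα hor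
      exact hpre x hxα (hor.imp_left (fun hxB => Walk.support_dropUntil_subset _ hzN hxB))
    refine ⟨α.append (((q.dropUntil t htmem).dropUntil z hzN).append
      (Walk.cons huv (q.takeUntil t htmem))), ?_, ?_, ?_⟩
    · exact splice_isPath huv α _ _ hαpath (hNpath.dropUntil hzN) hMpath hint hBM
    · simp [Walk.edges_append, Walk.edges_cons]
    · rw [wcost_append, wcost_append, wcost_cons]
      have h1 := wcost_takeUntil_add ω (q.dropUntil t htmem) hzN
      have h2 := wcost_takeUntil_add ω q htmem
      have n1 := wcost_nonneg hω' ((q.dropUntil t htmem).takeUntil z hzN)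
      linarith
  · -- z lies on M = q.takeUntil t : the path from v to t
    have hMsplit : ((q.takeUntil t htmem).takeUntil z hzM).support ++
        ((q.takeUntil t htmem).dropUntil z hzM).support.tail = (q.takeUntil t htmem).support := by
      rw [← Walk.support_append, Walk.take_spec]
    have hMnd := hMpath.support_nodup
    rw [← hMsplit, List.nodup_append] at hMnd
    have htB : t ∉ ((q.takeUntil t htmem).takeUntil z hzM).support := by
      intro htB
      have htdrop : t ∈ ((q.takeUntil t htmem).dropUntil z hzM).support.tail :=
        Walk.end_mem_tail_support_of_ne hzt ((q.takeUntil t htmem).dropUntil z hzM)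
      exact hMnd.2.2 _ htB _ htdrop rfl
    have hBM : ∀ x ∈ ((q.takeUntil t htmem).takeUntil z hzM).reverse.support,
        x ∉ (q.dropUntil t htmem).reverse.support := by
      intro x hxB hxM
      rw [Walk.support_reverse, List.mem_reverse] at hxB hxM
      have hxt : x = t := NMt x hxM (Walk.support_takeUntil_subset _ hzM hxB)
      exact htB (hxt ▸ hxB)
    have hint : ∀ x ∈ α.support,
        (x ∈ ((q.takeUntil t htmem).takeUntil z hzM).reverse.support ∨
          x ∈ (q.dropUntil t htmem).reverse.support) → x = z := by
      intro x hxα hor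
      refine hpre x hxα ?_
      rcases hor with h | h
      · rw [Walk.support_reverse, List.mem_reverse] at h
        exact Or.inr (Walk.support_takeUntil_subset _ hzM h)
      · rw [Walk.support_reverse, List.mem_reverse] at h
        exact Or.inl h
    refine ⟨α.append ((((q.takeUntil t htmem).takeUntil z hzM).reverse).append
      (Walk.cons huv.symm (q.dropUntil t htmem).reverse)), ?_, ?_, ?_⟩
    · exact splice_isPath huv.symm α _ _ hαpath ((hMpath.takeUntil hzM).reverse)
        hNpath.reverse hint hBM
    · simp [Walk.edges_append, Walk.edges_cons, Sym2.eq_swap]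
    · rw [wcost_append, wcost_append, wcost_cons, wcost_reverse, wcost_reverse]
      rw [show s(v, u) = s(u, v) from Sym2.eq_swap]
      have h1 := wcost_takeUntil_add ω (q.takeUntil t htmem) hzM
      have h2 := wcost_takeUntil_add ω q htmem
      have n1 := wcost_nonneg hω' ((q.takeUntil t htmem).dropUntil z hzM)
      linarith

end Helpers

/-- If `w` and `t` are each joined to the edge `uv` by an elementary
cycle through `uv`, then there is a simple `w`-`t` path passing through the edge `uv`
of cost at most the sum of the costs of the two cycles. -/
theorem simple_path_through_edge {V : Type*} [Fintype V] (G : SimpleGraph V)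
    (ω : Sym2 V → ℝ) (hω : ∀ e ∈ G.edgeSet, 0 < ω e)
    (u v w t : V) (huv : G.Adj u v) (hwt : w ≠ t)
    (cw : G.Walk w w) (hcw : cw.IsCycle) (hcwe : s(u, v) ∈ cw.edges)
    (ct : G.Walk t t) (hct : ct.IsCycle) (hcte : s(u, v) ∈ ct.edges) :
    ∃ p : G.Walk w t, p.IsPath ∧ s(u, v) ∈ p.edges ∧
      wcost ω p ≤ wcost ω cw + wcost ω ct := by
  classical
  obtain ⟨p, hp, hwmem, permw⟩ := cycle_split hcw hcwe
  obtain ⟨q, hq, htmem, permt⟩ := cycle_split hct hcte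
  have hω' : ∀ e ∈ G.edgeSet, 0 ≤ ω e := fun e he => (hω e he).le
  have huvnn : 0 ≤ ω s(u, v) := hω' _ (G.mem_edgeSet.mpr huv)
  have hcw_eq : wcost ω cw = ω s(u, v) + wcost ω p := by
    have h := (permw.map ω).sum_eq
    simpa [wcost] using h
  have hct_eq : wcost ω ct = ω s(u, v) + wcost ω q := by
    have h := (permt.map ω).sum_eq
    simpa [wcost] using h
  obtain ⟨P, hP, heP, hcP⟩ := assemble ω hω' huv hwt p hp hwmem q hq htmem
  exact ⟨P, hP, heP, by linarith⟩
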